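/- In the setting of the four-row commutative diagram described in the context, there is an isomorphism of R-modules C̃ / range(g̃) ≅ D'' / range(δ), i.e. the cokernel of g̃ : B̃ → C̃ is isomorphic to the cokernel of δ : D → D''. -/
import Mathlib


theorem cokernel_iso_of_diagram {R : Type*} [Ring R]
    {A A'' At B' B B'' Bt C' C C'' Ct D' D D'' : Type*}
    [AddCommGroup A] [AddCommGroup A''] [AddCommGroup At]
    [AddCommGroup B'] [AddCommGroup B] [AddCommGroup B''] [AddCommGroup Bt]
    [AddCommGroup C'] [AddCommGroup C] [AddCommGroup C''] [AddCommGroup Ct]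
    [AddCommGroup D'] [AddCommGroup D] [AddCommGroup D'']
    [Module R A] [Module R A''] [Module R At]
    [Module R B'] [Module R B] [Module R B''] [Module R Bt]
    [Module R C'] [Module R C] [Module R C''] [Module R Ct]
    [Module R D'] [Module R D] [Module R D'']
    (α : A →ₗ[R] A'') (α'' : A'' →ₗ[R] At)
    (β' : B' →ₗ[R] B) (β : B →ₗ[R] B'') (β'' : B'' →ₗ[R] Bt)
    (γ' : C' →ₗ[R] C) (γ : C →ₗ[R] C'') (γ'' : C'' →ₗ[R] Ct)
    (δ' : D' →ₗ[R] D) (δ : D →ₗ[R] D'')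
    (f : A →ₗ[R] B) (f'' : A'' →ₗ[R] B'') (ftil : At →ₗ[R] Bt)
    (g' : B' →ₗ[R] C') (g : B →ₗ[R] C) (g'' : B'' →ₗ[R] C'') (gtil : Bt →ₗ[R] Ct)
    (h' : C' →ₗ[R] D') (h : C →ₗ[R] D) (h'' : C'' →ₗ[R] D'')
    -- exactness of row 1 : A → A'' → At → 0
    (row1 : LinearMap.ker α'' = LinearMap.range α)
    (hα'' : Function.Surjective α'')
    -- exactness of row 2 : B' → B → B'' → Bt → 0
    (row2a : LinearMap.ker β = LinearMap.range β')
    (row2b : LinearMap.ker β'' = LinearMap.range β)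
    (hβ'' : Function.Surjective β'')
    -- exactness of row 3 : 0 → C' → C → C'' → Ct → 0
    (hγ' : Function.Injective γ')
    (row3a : LinearMap.ker γ = LinearMap.range γ')
    (row3b : LinearMap.ker γ'' = LinearMap.range γ)
    (hγ'' : Function.Surjective γ'')
    -- exactness of column 1 : B' → C' → D' → 0
    (col1 : LinearMap.ker h' = LinearMap.range g')
    (hh' : Function.Surjective h')
    -- exactness of column 2 : A → B → C → D → 0
    (col2a : LinearMap.ker g = LinearMap.range f)
    (col2b : LinearMap.ker h = LinearMap.range g)
    (hh : Function.Surjective h)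
    -- exactness of column 3 : 0 → A'' → B'' → C'' → D'' → 0
    (hf'' : Function.Injective f'')
    (col3a : LinearMap.ker g'' = LinearMap.range f'')
    (col3b : LinearMap.ker h'' = LinearMap.range g'')
    (hh'' : Function.Surjective h'')
    -- commutativity of all squares
    (sq1 : f'' ∘ₗ α = β ∘ₗ f) (sq2 : ftil ∘ₗ α'' = β'' ∘ₗ f'')
    (sq3 : g ∘ₗ β' = γ' ∘ₗ g') (sq4 : g'' ∘ₗ β = γ ∘ₗ g)
    (sq5 : gtil ∘ₗ β'' = γ'' ∘ₗ g'')
    (sq6 : h ∘ₗ γ' = δ' ∘ₗ h') (sq7 : h'' ∘ₗ γ = δ ∘ₗ h) :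
    Nonempty ((Ct ⧸ LinearMap.range gtil) ≃ₗ[R] (D'' ⧸ LinearMap.range δ)) := by
  -- range gtil = γ'' (range g'')
  have hr1 : LinearMap.range gtil = Submodule.map γ'' (LinearMap.range g'') := by
    rw [← LinearMap.range_comp, ← sq5, LinearMap.range_comp,
      LinearMap.range_eq_top.2 hβ'', Submodule.map_top]
  -- range δ = h'' (range γ)
  have hr2 : LinearMap.range δ = Submodule.map h'' (LinearMap.range γ) := by
    rw [← LinearMap.range_comp, sq7, LinearMap.range_comp,
      LinearMap.range_eq_top.2 hh, Submodule.map_top]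
  set p : C'' →ₗ[R] Ct ⧸ LinearMap.range gtil :=
    (Submodule.mkQ (LinearMap.range gtil)) ∘ₗ γ'' with hp
  set q : C'' →ₗ[R] D'' ⧸ LinearMap.range δ :=
    (Submodule.mkQ (LinearMap.range δ)) ∘ₗ h'' with hq
  have hps : Function.Surjective p := (Submodule.mkQ_surjective _).comp hγ''
  have hqs : Function.Surjective q := (Submodule.mkQ_surjective _).comp hh''
  have hker : LinearMap.ker p = LinearMap.ker q := by
    rw [hp, hq, LinearMap.ker_comp, LinearMap.ker_comp, Submodule.ker_mkQ,
      Submodule.ker_mkQ, hr1, hr2, Submodule.comap_map_eq, Submodule.comap_map_eq,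
      row3b, col3b, sup_comm]
  exact ⟨((p.quotKerEquivOfSurjective hps).symm.trans
    (Submodule.quotEquivOfEq _ _ hker)).trans (q.quotKerEquivOfSurjective hqs)⟩
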